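/- Let dA, dB ≥ 2 and d = dA·dB. No complete set of d+1 pairwise mutually unbiased orthonormal bases of EuclideanSpace ℂ (Fin dA × Fin dB) can consist entirely of product vectors: in any such complete set at least one basis vector ψ satisfies P(ψ) < 1 (i.e., is entangled). -/

import Mathlib

open Finset

local notation "conj'" => starRingEnd ℂ

lemma delta4 {ι : Type*} [Fintype ι] [DecidableEq ι] (X : ι → ι → ι → ι → ℂ) :
    (∑ i, ∑ j, ∑ k, ∑ l, X i j k l *
      ((if i = k then (1:ℂ) else 0) * (if j = l then 1 else 0)
        + (if i = l then (1:ℂ) else 0) * (if j = k then 1 else 0)))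
    = (∑ i, ∑ j, X i j i j) + (∑ i, ∑ j, X i j j i) := by
  simp [mul_add, Finset.sum_add_distrib, mul_ite, mul_one, mul_zero, ite_mul, zero_mul,
    Finset.sum_ite_eq, Finset.sum_ite_eq']

lemma delta4' {ι : Type*} [Fintype ι] [DecidableEq ι] (X : ι → ι → ι → ι → ℂ) :
    (∑ i, ∑ j, ∑ k, ∑ l,
      ((if i = k then (1:ℂ) else 0) * (if j = l then 1 else 0)
        + (if i = l then (1:ℂ) else 0) * (if j = k then 1 else 0)) * X i j k l)
    = (∑ i, ∑ j, X i j i j) + (∑ i, ∑ j, X i j j i) := by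
  simp [add_mul, Finset.sum_add_distrib, mul_ite, mul_one, mul_zero, ite_mul, zero_mul, one_mul,
    Finset.sum_ite_eq, Finset.sum_ite_eq']

lemma deltasq {ι : Type*} [Fintype ι] [DecidableEq ι] :
    (∑ i : ι, ∑ j : ι, ∑ k : ι, ∑ l : ι,
      ((if i = k then (1:ℂ) else 0) * (if j = l then 1 else 0)
        + (if i = l then (1:ℂ) else 0) * (if j = k then 1 else 0)) *
      conj' ((if i = k then (1:ℂ) else 0) * (if j = l then 1 else 0)
        + (if i = l then (1:ℂ) else 0) * (if j = k then 1 else 0)))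
    = 2 * ((Fintype.card ι : ℂ)^2 + (Fintype.card ι : ℂ)) := by
  have : ∀ i j k l : ι, conj' ((if i = k then (1:ℂ) else 0) * (if j = l then 1 else 0)
        + (if i = l then (1:ℂ) else 0) * (if j = k then 1 else 0))
      = ((if i = k then (1:ℂ) else 0) * (if j = l then 1 else 0)
        + (if i = l then (1:ℂ) else 0) * (if j = k then 1 else 0)) := by
    intros; simp only [map_add, map_mul, apply_ite conj', map_one, map_zero]
  simp only [this]
  rw [delta4' (fun i j k l => ((if i = k then (1:ℂ) else 0) * (if j = l then 1 else 0)
        + (if i = l then (1:ℂ) else 0) * (if j = k then 1 else 0)))]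
  simp [Finset.sum_add_distrib, Finset.sum_ite_eq, Finset.sum_ite_eq', Finset.card_univ]
  ring


lemma sum_factor4 {α β γ δ : Type*} [Fintype α] [Fintype β] [Fintype γ] [Fintype δ]
    (f : α → ℂ) (g : β → ℂ) (h : γ → ℂ) (e : δ → ℂ) :
    ∑ i : α, ∑ j : β, ∑ k : γ, ∑ l : δ, f i * g j * h k * e l
      = (∑ i, f i) * (∑ j, g j) * (∑ k, h k) * (∑ l, e l) := by
  simp only [← Finset.mul_sum, ← Finset.sum_mul]

lemma sum_factor2 {α β : Type*} [Fintype α] [Fintype β] (f : α → ℂ) (g : β → ℂ) :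
    ∑ i : α, ∑ j : β, f i * g j = (∑ i, f i) * (∑ j, g j) := by
  simp only [← Finset.mul_sum, ← Finset.sum_mul]

lemma sum_swap3 {α β γ : Type*} [Fintype α] [Fintype β] [Fintype γ] (X : α → β → γ → ℂ) :
    (∑ i, ∑ j, ∑ a, X i j a) = ∑ a, ∑ i, ∑ j, X i j a := by
  conv_lhs => enter [2, i]; rw [Finset.sum_comm]
  rw [Finset.sum_comm]

lemma sum_swap5 {α β γ δ ε : Type*} [Fintype α] [Fintype β] [Fintype γ] [Fintype δ] [Fintype ε]
    (X : α → β → γ → δ → ε → ℂ) :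
    (∑ i, ∑ j, ∑ k, ∑ l, ∑ a, X i j k l a) = ∑ a, ∑ i, ∑ j, ∑ k, ∑ l, X i j k l a := by
  conv_lhs => enter [2, i, 2, j, 2, k]; rw [Finset.sum_comm]
  conv_lhs => enter [2, i, 2, j]; rw [Finset.sum_comm]
  conv_lhs => enter [2, i]; rw [Finset.sum_comm]
  rw [Finset.sum_comm]

lemma sum_swap6 {α β γ δ ε ζ : Type*} [Fintype α] [Fintype β] [Fintype γ] [Fintype δ]
    [Fintype ε] [Fintype ζ] (X : α → β → γ → δ → ε → ζ → ℂ) :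
    (∑ i, ∑ j, ∑ k, ∑ l, ∑ a, ∑ b, X i j k l a b)
      = ∑ a, ∑ b, ∑ i, ∑ j, ∑ k, ∑ l, X i j k l a b := by
  rw [sum_swap5]
  exact Finset.sum_congr rfl fun a _ => sum_swap5 _


lemma Fzero {ι κ : Type*} [Fintype ι] [Fintype κ] [DecidableEq ι]
    (v : κ → ι → ℂ)
    (hn : ∀ a, (∑ i, conj' (v a i) * v a i) = 1)
    (hs : (∑ a : κ, ∑ b : κ, ((∑ i, conj' (v a i) * v b i) *
        conj' (∑ i, conj' (v a i) * v b i)) ^ 2)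
        = 2 * ((Fintype.card ι : ℂ) ^ 2 + (Fintype.card ι : ℂ)))
    (hcard : (Fintype.card κ : ℂ) = (Fintype.card ι : ℂ) ^ 2 + (Fintype.card ι : ℂ)) :
    ∀ i j k l : ι, (∑ a, v a i * v a j * conj' (v a k) * conj' (v a l))
      = (if i = k then (1:ℂ) else 0) * (if j = l then 1 else 0)
        + (if i = l then (1:ℂ) else 0) * (if j = k then 1 else 0) := by
  classical
  set F : ι → ι → ι → ι → ℂ :=
    fun i j k l => ∑ a, v a i * v a j * conj' (v a k) * conj' (v a l) with hF
  set G : ι → ι → ι → ι → ℂ :=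
    fun i j k l => (if i = k then (1:ℂ) else 0) * (if j = l then 1 else 0)
        + (if i = l then (1:ℂ) else 0) * (if j = k then 1 else 0) with hG
  -- conj of F
  have hconjF : ∀ i j k l, conj' (F i j k l)
      = ∑ a, conj' (v a i) * conj' (v a j) * v a k * v a l := by
    intro i j k l
    rw [hF, map_sum]
    exact Finset.sum_congr rfl fun a _ => by simp [map_mul]
  have hconjG : ∀ i j k l, conj' (G i j k l) = G i j k l := by
    intro i j k l
    rw [hG]
    simp only [map_add, map_mul, apply_ite conj', map_one, map_zero]
  -- S1
  have S1 : (∑ i, ∑ j, ∑ k, ∑ l, F i j k l * conj' (F i j k l))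
      = 2 * ((Fintype.card ι : ℂ) ^ 2 + (Fintype.card ι : ℂ)) := by
    rw [← hs]
    have h1 : ∀ i j k l, F i j k l * conj' (F i j k l)
        = ∑ a : κ, ∑ b : κ, (v a i * conj' (v b i)) * (v a j * conj' (v b j))
            * (conj' (v a k) * v b k) * (conj' (v a l) * v b l) := by
      intro i j k l
      rw [hconjF, hF, Finset.sum_mul_sum]
      exact Finset.sum_congr rfl fun a _ => Finset.sum_congr rfl fun b _ => by ring
    calc (∑ i, ∑ j, ∑ k, ∑ l, F i j k l * conj' (F i j k l))
        = ∑ i, ∑ j, ∑ k, ∑ l, ∑ a : κ, ∑ b : κ,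
            (v a i * conj' (v b i)) * (v a j * conj' (v b j))
            * (conj' (v a k) * v b k) * (conj' (v a l) * v b l) := by
          exact Finset.sum_congr rfl fun i _ => Finset.sum_congr rfl fun j _ =>
            Finset.sum_congr rfl fun k _ => Finset.sum_congr rfl fun l _ => h1 i j k l
      _ = ∑ a : κ, ∑ b : κ, ∑ i, ∑ j, ∑ k, ∑ l,
            (v a i * conj' (v b i)) * (v a j * conj' (v b j))
            * (conj' (v a k) * v b k) * (conj' (v a l) * v b l) := sum_swap6 _
      _ = ∑ a : κ, ∑ b : κ, ((∑ i, conj' (v a i) * v b i) *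
            conj' (∑ i, conj' (v a i) * v b i)) ^ 2 := by
          refine Finset.sum_congr rfl fun a _ => Finset.sum_congr rfl fun b _ => ?_
          rw [sum_factor4]
          have e1 : (∑ i, v a i * conj' (v b i)) = conj' (∑ i, conj' (v a i) * v b i) := by
            rw [map_sum]
            exact Finset.sum_congr rfl fun i _ => by simp [map_mul]
          have e2 : (∑ k, conj' (v a k) * v b k) = (∑ i, conj' (v a i) * v b i) := rfl
          rw [e1, e2]
          ring
  -- S2
  have hFdiag : ∀ (w : ι → ι → ℂ), (∀ i j, w i j = ∑ a, (v a i * conj' (v a i)) * (v a j * conj' (v a j))) →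
      (∑ i, ∑ j, w i j) = (Fintype.card κ : ℂ) := by
    intro w hw
    have : (∑ i, ∑ j, w i j) = ∑ a : κ, (∑ i, v a i * conj' (v a i)) * (∑ j, v a j * conj' (v a j)) := by
      calc (∑ i, ∑ j, w i j)
          = ∑ i, ∑ j, ∑ a, (v a i * conj' (v a i)) * (v a j * conj' (v a j)) := by
            exact Finset.sum_congr rfl fun i _ => Finset.sum_congr rfl fun j _ => hw i j
        _ = ∑ a, ∑ i, ∑ j, (v a i * conj' (v a i)) * (v a j * conj' (v a j)) := sum_swap3 _
        _ = _ := Finset.sum_congr rfl fun a _ => sum_factor2 _ _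
    rw [this]
    have hone : ∀ a, (∑ i, v a i * conj' (v a i)) = 1 := by
      intro a
      rw [← hn a]
      exact Finset.sum_congr rfl fun i _ => mul_comm _ _
    simp [hone, Finset.card_univ]
  have S2 : (∑ i, ∑ j, ∑ k, ∑ l, F i j k l * G i j k l) = 2 * (Fintype.card κ : ℂ) := by
    rw [show (∑ i, ∑ j, ∑ k, ∑ l, F i j k l * G i j k l)
        = (∑ i, ∑ j, F i j i j) + (∑ i, ∑ j, F i j j i) from delta4 F]
    have h1 : (∑ i, ∑ j, F i j i j) = (Fintype.card κ : ℂ) :=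
      hFdiag _ (fun i j => Finset.sum_congr rfl fun a _ => by ring)
    have h2 : (∑ i, ∑ j, F i j j i) = (Fintype.card κ : ℂ) :=
      hFdiag _ (fun i j => Finset.sum_congr rfl fun a _ => by ring)
    rw [h1, h2]; ring
  -- S3
  have S3 : (∑ i, ∑ j, ∑ k, ∑ l, G i j k l * conj' (F i j k l)) = 2 * (Fintype.card κ : ℂ) := by
    rw [show (∑ i, ∑ j, ∑ k, ∑ l, G i j k l * conj' (F i j k l))
        = (∑ i, ∑ j, conj' (F i j i j)) + (∑ i, ∑ j, conj' (F i j j i)) from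
        delta4' (fun i j k l => conj' (F i j k l))]
    have h1 : (∑ i, ∑ j, conj' (F i j i j)) = (Fintype.card κ : ℂ) :=
      hFdiag _ (fun i j => by rw [hconjF]; exact Finset.sum_congr rfl fun a _ => by ring)
    have h2 : (∑ i, ∑ j, conj' (F i j j i)) = (Fintype.card κ : ℂ) :=
      hFdiag _ (fun i j => by rw [hconjF]; exact Finset.sum_congr rfl fun a _ => by ring)
    rw [h1, h2]; ring
  -- S4
  have S4 : (∑ i, ∑ j, ∑ k, ∑ l, G i j k l * conj' (G i j k l))
      = 2 * ((Fintype.card ι : ℂ) ^ 2 + (Fintype.card ι : ℂ)) := by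
    simp only [hconjG]
    rw [show (∑ i, ∑ j, ∑ k, ∑ l, G i j k l * G i j k l)
        = (∑ i, ∑ j, G i j i j) + (∑ i, ∑ j, G i j j i) from delta4 G]
    rw [hG]
    simp [Finset.sum_add_distrib, Finset.sum_ite_eq, Finset.sum_ite_eq', Finset.card_univ]
    ring
  -- total
  have key : (∑ i, ∑ j, ∑ k, ∑ l, (F i j k l - G i j k l) * conj' (F i j k l - G i j k l)) = 0 := by
    have expand : ∀ i j k l, (F i j k l - G i j k l) * conj' (F i j k l - G i j k l)
        = F i j k l * conj' (F i j k l) - F i j k l * G i j k l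
          - G i j k l * conj' (F i j k l) + G i j k l * conj' (G i j k l) := by
      intro i j k l
      rw [map_sub, hconjG]
      ring
    simp only [expand, Finset.sum_add_distrib, Finset.sum_sub_distrib]
    rw [S1, S2, S3, S4, hcard]
    ring
  -- deduce pointwise zero
  have keyR : (∑ i, ∑ j, ∑ k, ∑ l, Complex.normSq (F i j k l - G i j k l)) = 0 := by
    have : ((∑ i, ∑ j, ∑ k, ∑ l, Complex.normSq (F i j k l - G i j k l) : ℝ) : ℂ) = 0 := by
      push_cast
      rw [← key]
      exact Finset.sum_congr rfl fun i _ => Finset.sum_congr rfl fun j _ =>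
        Finset.sum_congr rfl fun k _ => Finset.sum_congr rfl fun l _ =>
          (Complex.mul_conj _).symm
    exact_mod_cast this
  have hprod : (∑ t : ι × ι × ι × ι,
      Complex.normSq (F t.1 t.2.1 t.2.2.1 t.2.2.2 - G t.1 t.2.1 t.2.2.1 t.2.2.2)) = 0 := by
    rw [Fintype.sum_prod_type]
    simp only [Fintype.sum_prod_type]
    exact keyR
  intro i j k l
  have := (Finset.sum_eq_zero_iff_of_nonneg (fun t _ => Complex.normSq_nonneg _)).mp hprod
    (i, j, k, l) (Finset.mem_univ _)
  have h0 : F i j k l - G i j k l = 0 := by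
    simpa [Complex.normSq_eq_zero] using this
  have := sub_eq_zero.mp h0
  rw [hF, hG] at this
  exact this

/-- Purity of the reduced density operator on subsystem `A`. -/
noncomputable def purity {dA dB : ℕ} (ψ : EuclideanSpace ℂ (Fin dA × Fin dB)) : ℝ :=
  ∑ a : Fin dA, ∑ a' : Fin dA,
    ‖∑ b : Fin dB, ψ (a, b) * (starRingEnd ℂ) (ψ (a', b))‖ ^ 2

/-- No complete set of `dA·dB + 1` pairwise mutually unbiased orthonormal bases of
`ℂ^{dA} ⊗ ℂ^{dB}` (with `dA, dB ≥ 2`) consists entirely of product vectors: some basis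
vector `ψ` has purity `P(ψ) < 1`, i.e. is entangled. -/
theorem complete_mub_not_all_product (dA dB : ℕ) (hA : 2 ≤ dA) (hB : 2 ≤ dB)
    (e : Fin (dA * dB + 1) →
      OrthonormalBasis (Fin (dA * dB)) ℂ (EuclideanSpace ℂ (Fin dA × Fin dB)))
    (hmub : ∀ m n : Fin (dA * dB + 1), m ≠ n →
      ∀ j k : Fin (dA * dB),
        ‖(inner ℂ (e m j) (e n k) : ℂ)‖ ^ 2 = 1 / (dA * dB : ℝ)) :
    ∃ (m : Fin (dA * dB + 1)) (j : Fin (dA * dB)), purity (e m j) < 1 := by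
  classical
  have hA' : (2:ℝ) ≤ dA := by exact_mod_cast hA
  have hB' : (2:ℝ) ≤ dB := by exact_mod_cast hB
  have hAC : (dA : ℂ) ≠ 0 := by
    have : (0:ℕ) < dA := by omega
    exact_mod_cast this.ne'
  have hBC : (dB : ℂ) ≠ 0 := by
    have : (0:ℕ) < dB := by omega
    exact_mod_cast this.ne'
  set v : (Fin (dA * dB + 1) × Fin (dA * dB)) → (Fin dA × Fin dB) → ℂ :=
    fun a i => e a.1 a.2 i with hv
  have hinner : ∀ (m n : Fin (dA * dB + 1)) (p q : Fin (dA * dB)),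
      (inner ℂ (e m p) (e n q) : ℂ) = ∑ i : Fin dA × Fin dB, conj' (e m p i) * (e n q i) := by
    intro m n p q
    rw [PiLp.inner_apply]
    exact Finset.sum_congr rfl fun i _ => by simp [mul_comm]
  have horth : ∀ (m : Fin (dA * dB + 1)) (p q : Fin (dA * dB)),
      (inner ℂ (e m p) (e m q) : ℂ) = if p = q then 1 else 0 :=
    fun m => orthonormal_iff_ite.mp (e m).orthonormal
  -- normalization
  have hn : ∀ a : Fin (dA * dB + 1) × Fin (dA * dB), (∑ i, conj' (v a i) * v a i) = 1 := by
    intro a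
    have := horth a.1 a.2 a.2
    rw [hinner] at this
    simpa using this
  -- card of index type
  have hcardι : (Fintype.card (Fin dA × Fin dB)) = dA * dB := by
    simp [Fintype.card_prod]
  -- MUB sum hypothesis
  have hs : (∑ a : Fin (dA * dB + 1) × Fin (dA * dB), ∑ b : Fin (dA * dB + 1) × Fin (dA * dB),
      ((∑ i, conj' (v a i) * v b i) * conj' (∑ i, conj' (v a i) * v b i)) ^ 2)
      = 2 * ((Fintype.card (Fin dA × Fin dB) : ℂ) ^ 2 + (Fintype.card (Fin dA × Fin dB) : ℂ)) := by
    have hterm : ∀ (m n : Fin (dA * dB + 1)) (p q : Fin (dA * dB)),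
        ((∑ i, conj' (v (m,p) i) * v (n,q) i) * conj' (∑ i, conj' (v (m,p) i) * v (n,q) i)) ^ 2
        = ((‖(inner ℂ (e m p) (e n q) : ℂ)‖ ^ 2 : ℝ) : ℂ) ^ 2 := by
      intro m n p q
      rw [show (∑ i, conj' (v (m,p) i) * v (n,q) i) = (inner ℂ (e m p) (e n q) : ℂ) from
        (hinner m n p q).symm]
      rw [Complex.mul_conj, ← Complex.sq_norm]
    have hinner2 : ∀ m n : Fin (dA * dB + 1),
        (∑ p : Fin (dA * dB), ∑ q : Fin (dA * dB),
          ((∑ i, conj' (v (m,p) i) * v (n,q) i) * conj' (∑ i, conj' (v (m,p) i) * v (n,q) i)) ^ 2)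
        = if m = n then ((dA * dB : ℕ) : ℂ) else 1 := by
      intro m n
      by_cases hmn : m = n
      · subst hmn
        have h1 : ∀ p q : Fin (dA * dB),
            ((∑ i, conj' (v (m,p) i) * v (m,q) i) * conj' (∑ i, conj' (v (m,p) i) * v (m,q) i)) ^ 2
            = if p = q then (1:ℂ) else 0 := by
          intro p q
          rw [hterm, horth]
          by_cases h : p = q <;> simp [h]
        simp only [h1, Finset.sum_ite_eq, Finset.mem_univ, if_true]
        simp
      · have h1 : ∀ p q : Fin (dA * dB),
            ((∑ i, conj' (v (m,p) i) * v (n,q) i) * conj' (∑ i, conj' (v (m,p) i) * v (n,q) i)) ^ 2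
            = ((1 / ((dA:ℝ) * (dB:ℝ)) : ℝ) : ℂ) ^ 2 := by
          intro p q
          rw [hterm, hmub m n hmn p q]
        simp only [h1, Finset.sum_const, Finset.card_univ, Fintype.card_fin, nsmul_eq_mul]
        rw [if_neg hmn]
        push_cast
        field_simp
    rw [Fintype.sum_prod_type]
    have flatb : ∀ m p, (∑ b : Fin (dA * dB + 1) × Fin (dA * dB),
        ((∑ i, conj' (v (m,p) i) * v b i) * conj' (∑ i, conj' (v (m,p) i) * v b i)) ^ 2)
        = ∑ n, ∑ q, ((∑ i, conj' (v (m,p) i) * v (n,q) i)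
            * conj' (∑ i, conj' (v (m,p) i) * v (n,q) i)) ^ 2 := by
      intro m p
      rw [Fintype.sum_prod_type]
    calc (∑ m, ∑ p, ∑ b : Fin (dA * dB + 1) × Fin (dA * dB),
          ((∑ i, conj' (v (m,p) i) * v b i) * conj' (∑ i, conj' (v (m,p) i) * v b i)) ^ 2)
        = ∑ m, ∑ p, ∑ n, ∑ q, ((∑ i, conj' (v (m,p) i) * v (n,q) i)
            * conj' (∑ i, conj' (v (m,p) i) * v (n,q) i)) ^ 2 := by
          exact Finset.sum_congr rfl fun m _ => Finset.sum_congr rfl fun p _ => flatb m p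
      _ = ∑ m, ∑ n, ∑ p, ∑ q, ((∑ i, conj' (v (m,p) i) * v (n,q) i)
            * conj' (∑ i, conj' (v (m,p) i) * v (n,q) i)) ^ 2 := by
          exact Finset.sum_congr rfl fun m _ => Finset.sum_comm
      _ = ∑ m : Fin (dA * dB + 1), ∑ n : Fin (dA * dB + 1),
            (if m = n then ((dA * dB : ℕ) : ℂ) else 1) := by
          exact Finset.sum_congr rfl fun m _ => Finset.sum_congr rfl fun n _ => hinner2 m n
      _ = 2 * ((Fintype.card (Fin dA × Fin dB) : ℂ) ^ 2 + (Fintype.card (Fin dA × Fin dB) : ℂ)) := by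
          have : ∀ m : Fin (dA * dB + 1), (∑ n : Fin (dA * dB + 1),
              (if m = n then ((dA * dB : ℕ) : ℂ) else 1))
              = ∑ n : Fin (dA * dB + 1), ((if m = n then ((dA * dB : ℕ) : ℂ) - 1 else 0) + 1) := by
            intro m
            refine Finset.sum_congr rfl fun n _ => ?_
            by_cases h : m = n <;> simp [h]
          simp only [this, Finset.sum_add_distrib, Finset.sum_ite_eq, Finset.mem_univ, if_true,
            Finset.sum_const, Finset.card_univ, Fintype.card_fin, nsmul_eq_mul, mul_one, hcardι]
          push_cast
          ring
  have hcard : ((Fintype.card (Fin (dA * dB + 1) × Fin (dA * dB))) : ℂ)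
      = (Fintype.card (Fin dA × Fin dB) : ℂ) ^ 2 + (Fintype.card (Fin dA × Fin dB) : ℂ) := by
    simp [Fintype.card_prod]
    push_cast
    ring
  have key := Fzero v hn hs hcard
  -- purity in complex form
  have hpurC : ∀ (m : Fin (dA * dB + 1)) (p : Fin (dA * dB)),
      ((purity (e m p) : ℝ) : ℂ)
      = ∑ a : Fin dA, ∑ a' : Fin dA, ∑ b : Fin dB, ∑ b' : Fin dB,
          v (m,p) (a,b) * v (m,p) (a',b') * conj' (v (m,p) (a',b)) * conj' (v (m,p) (a,b')) := by
    intro m p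
    unfold purity
    push_cast
    refine Finset.sum_congr rfl fun a _ => Finset.sum_congr rfl fun a' _ => ?_
    have hz : ((‖∑ b : Fin dB, e m p (a, b) * conj' (e m p (a', b))‖ : ℝ) : ℂ) ^ 2
        = (∑ b : Fin dB, e m p (a, b) * conj' (e m p (a', b)))
          * conj' (∑ b : Fin dB, e m p (a, b) * conj' (e m p (a', b))) := by
      rw [← Complex.ofReal_pow, Complex.sq_norm]
      exact (Complex.mul_conj _).symm
    rw [hz, map_sum, Finset.sum_mul_sum]
    refine Finset.sum_congr rfl fun b _ => Finset.sum_congr rfl fun b' _ => ?_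
    simp only [map_mul, Complex.conj_conj, hv]
    ring
  -- sum of purities
  have hsum : (∑ m : Fin (dA * dB + 1), ∑ p : Fin (dA * dB), ((purity (e m p) : ℝ) : ℂ))
      = (dA : ℂ) * (dB : ℂ) ^ 2 + (dA : ℂ) ^ 2 * (dB : ℂ) := by
    have hGval : ∀ (a a' : Fin dA) (b b' : Fin dB),
        ((if ((a,b) : Fin dA × Fin dB) = (a',b) then (1:ℂ) else 0)
          * (if ((a',b') : Fin dA × Fin dB) = (a,b') then 1 else 0)
        + (if ((a,b) : Fin dA × Fin dB) = (a,b') then (1:ℂ) else 0)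
          * (if ((a',b') : Fin dA × Fin dB) = (a',b) then 1 else 0))
        = (if a = a' then (1:ℂ) else 0) + (if b = b' then (1:ℂ) else 0) := by
      intro a a' b b'
      by_cases h1 : a = a' <;> by_cases h2 : b = b' <;> simp [h1, h2, Prod.ext_iff, eq_comm]
    calc (∑ m : Fin (dA * dB + 1), ∑ p : Fin (dA * dB), ((purity (e m p) : ℝ) : ℂ))
        = ∑ m : Fin (dA * dB + 1), ∑ p : Fin (dA * dB),
            ∑ a : Fin dA, ∑ a' : Fin dA, ∑ b : Fin dB, ∑ b' : Fin dB,
            v (m,p) (a,b) * v (m,p) (a',b') * conj' (v (m,p) (a',b)) * conj' (v (m,p) (a,b')) := by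
          exact Finset.sum_congr rfl fun m _ => Finset.sum_congr rfl fun p _ => hpurC m p
      _ = ∑ a : Fin dA, ∑ a' : Fin dA, ∑ b : Fin dB, ∑ b' : Fin dB,
            ∑ m : Fin (dA * dB + 1), ∑ p : Fin (dA * dB),
            v (m,p) (a,b) * v (m,p) (a',b') * conj' (v (m,p) (a',b)) * conj' (v (m,p) (a,b')) :=
          (sum_swap6 (fun a a' b b' m p =>
            v (m,p) (a,b) * v (m,p) (a',b') * conj' (v (m,p) (a',b)) * conj' (v (m,p) (a,b')))).symm
      _ = ∑ a : Fin dA, ∑ a' : Fin dA, ∑ b : Fin dB, ∑ b' : Fin dB,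
            ((if a = a' then (1:ℂ) else 0) + (if b = b' then (1:ℂ) else 0)) := by
          refine Finset.sum_congr rfl fun a _ => Finset.sum_congr rfl fun a' _ =>
            Finset.sum_congr rfl fun b _ => Finset.sum_congr rfl fun b' _ => ?_
          rw [← hGval a a' b b']
          have hk := key (a,b) (a',b') (a',b) (a,b')
          rw [Fintype.sum_prod_type] at hk
          exact hk
      _ = (dA : ℂ) * (dB : ℂ) ^ 2 + (dA : ℂ) ^ 2 * (dB : ℂ) := by
          simp [Finset.sum_add_distrib, Finset.sum_ite_eq, Finset.sum_const, Finset.card_univ]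
          try push_cast
          try ring
  -- back to the reals
  have hsumR : (∑ m : Fin (dA * dB + 1), ∑ p : Fin (dA * dB), purity (e m p))
      = (dA : ℝ) * (dB : ℝ) ^ 2 + (dA : ℝ) ^ 2 * (dB : ℝ) := by
    have : ((∑ m : Fin (dA * dB + 1), ∑ p : Fin (dA * dB), purity (e m p) : ℝ) : ℂ)
        = (((dA : ℝ) * (dB : ℝ) ^ 2 + (dA : ℝ) ^ 2 * (dB : ℝ) : ℝ) : ℂ) := by
      push_cast
      rw [← hsum]
    exact_mod_cast this
  -- final contradiction
  by_contra hcon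
  push_neg at hcon
  have hge : ((dA * dB + 1 : ℕ) : ℝ) * ((dA * dB : ℕ) : ℝ)
      ≤ ∑ m : Fin (dA * dB + 1), ∑ p : Fin (dA * dB), purity (e m p) := by
    have : ((dA * dB + 1 : ℕ) : ℝ) * ((dA * dB : ℕ) : ℝ)
        = ∑ _m : Fin (dA * dB + 1), ∑ _p : Fin (dA * dB), (1:ℝ) := by
      simp [Finset.sum_const, Finset.card_univ]
    rw [this]
    exact Finset.sum_le_sum fun m _ => Finset.sum_le_sum fun p _ => hcon m p
  rw [hsumR] at hge
  push_cast at hge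
  have h1 : (0:ℝ) < (dA:ℝ) - 1 := by linarith
  have h2 : (0:ℝ) < (dB:ℝ) - 1 := by linarith
  have h3 : (0:ℝ) < (dA:ℝ) * (dB:ℝ) := by nlinarith
  nlinarith [mul_pos (mul_pos h3 h1) h2]
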